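/- The group homomorphism from the free group on the set ℤ* × ℤ × {0,1} to F sending the generator (j, l, 0) to v_j^l and the generator (j, l, 1) to w_j^l is injective, and its image is H; that is, S = {v_j^l, w_j^l : j ∈ ℤ*, l ∈ ℤ} is a free basis of H. Likewise S̃ is a free basis of H̃ in F̃. -/

import Mathlib

/-- `ℤ* = ℤ \ {0}`. -/
abbrev Zstar : Type := {n : ℤ // n ≠ 0}

/-- Index set for the free basis `S` (and `S̃`): `(j, l, b)` with `b = false` for `v_j^l`
and `b = true` for `w_j^l`. -/
abbrev SIdx : Type := Zstar × ℤ × Bool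

/-- The free group on three generators `x, y, z`. -/
abbrev F3 : Type := FreeGroup (Fin 3)

/-- The generator `x`. -/
def gx : F3 := FreeGroup.of 0
/-- The generator `y`. -/
def gy : F3 := FreeGroup.of 1
/-- The generator `z`. -/
def gz : F3 := FreeGroup.of 2

/-- `v_j^l = z^{-l} x^j y^{-ρ(j)} z^l`. -/
def vgen (ρ : Equiv.Perm Zstar) (j : Zstar) (l : ℤ) : F3 :=
  gz ^ (-l) * gx ^ j.val * gy ^ (-(ρ j).val) * gz ^ l

/-- `w_j^l = z^{-l} x^j z y^{-θ(j)} z^l`. -/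
def wgen (θ : Equiv.Perm Zstar) (j : Zstar) (l : ℤ) : F3 :=
  gz ^ (-l) * gx ^ j.val * gz * gy ^ (-(θ j).val) * gz ^ l

/-- The element of `S` indexed by `(j, l, b)`. -/
def sElem (ρ θ : Equiv.Perm Zstar) (p : SIdx) : F3 :=
  if p.2.2 then wgen θ p.1 p.2.1 else vgen ρ p.1 p.2.1

/-- The canonical homomorphism from the free group on the index set of `S` to `F`,
sending `(j,l,false) ↦ v_j^l` and `(j,l,true) ↦ w_j^l`. -/
def sMap (ρ θ : Equiv.Perm Zstar) : FreeGroup SIdx →* F3 :=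
  FreeGroup.lift (sElem ρ θ)

/-- `H = ⟨S⟩ ≤ F`. -/
def Hsub (ρ θ : Equiv.Perm Zstar) : Subgroup F3 :=
  Subgroup.closure (Set.range (sElem ρ θ))

/-- The tuple `ω = (ρ, θ, ρ̃, θ̃, ι)`; the bijection `ι : S → S̃` is recorded as a bijection
of the index sets. -/
structure OmegaTuple : Type where
  ρ : Equiv.Perm Zstar
  θ : Equiv.Perm Zstar
  ρt : Equiv.Perm Zstar
  θt : Equiv.Perm Zstar
  ι : SIdx ≃ SIdx

/-- The two maps from the abstract copy of `H` (the free group on the index set of `S`)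
into the two copies of `F₃`: into `F` via `S`, and into `F̃` via `ι` followed by `S̃`. -/
def pushMaps (ω : OmegaTuple) : Bool → (FreeGroup SIdx →* F3) :=
  fun b => if b then (sMap ω.ρt ω.θt).comp (FreeGroup.map ω.ι) else sMap ω.ρ ω.θ

/-- `G(ω) = F *_{H = H̃} F̃`, the amalgamated product. -/
def GroupOmega (ω : OmegaTuple) : Type := Monoid.PushoutI (pushMaps ω)

instance (ω : OmegaTuple) : Group (GroupOmega ω) := by
  delta GroupOmega; infer_instance

/-- The canonical map `F → G(ω)`. -/
def ofb (ω : OmegaTuple) : F3 →* GroupOmega ω := Monoid.PushoutI.of (φ := pushMaps ω) false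

/-- The canonical map `F̃ → G(ω)`. -/
def oft (ω : OmegaTuple) : F3 →* GroupOmega ω := Monoid.PushoutI.of (φ := pushMaps ω) true

/-- `c_{l,j} = z^l x^j`. -/
def cElem (l j : ℤ) : F3 := gz ^ l * gx ^ j

/-- `d_{M,M'}^l = v_M^l (v_{M'}^l)⁻¹`. -/
def dElem (ρ : Equiv.Perm Zstar) (M M' : Zstar) (l : ℤ) : F3 :=
  vgen ρ M l * (vgen ρ M' l)⁻¹

/-- The index `(j,l,b)` corresponds to an element of `S_N` (resp. `S̃_N`):
`j ∈ [-N,N] ∩ ℤ*` and `l ∈ [-N,N]`. -/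
def InSN (N : ℤ) (p : SIdx) : Prop :=
  p.1.val ∈ Set.Icc (-N) N ∧ p.2.1 ∈ Set.Icc (-N) N

/-- A (total) map `g` extends a partial bijection `f`. -/
def Extends {α β : Type*} (g : α → β) (f : PartialEquiv α β) : Prop :=
  ∀ a ∈ f.source, g a = f a

/-- A partial bijection of `ℤ*` is independent from `[-N, N]`: its domain and image
are disjoint from `[-N, N]`. -/
def IndepFromIcc (f : PartialEquiv Zstar Zstar) (N : ℤ) : Prop :=
  (∀ a ∈ f.source, a.val ∉ Set.Icc (-N) N) ∧ (∀ a ∈ f.target, a.val ∉ Set.Icc (-N) N)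

/-- A partial bijection of the index set is independent from `(S_N, S̃_N)`:
its domain misses `S_N` and its image misses `S̃_N`. -/
def IndepFromSN (f : PartialEquiv SIdx SIdx) (N : ℤ) : Prop :=
  (∀ p ∈ f.source, ¬ InSN N p) ∧ (∀ p ∈ f.target, ¬ InSN N p)

set_option linter.unusedSectionVars false
section Infra

open FreeGroup List

variable {α : Type*} [DecidableEq α]

/-- Two letters that do not cancel each other. -/
def Good (a b : α × Bool) : Prop := ¬(a.1 = b.1 ∧ a.2 = !b.2)

lemma good_of_ne {a b : α × Bool} (h : a.1 ≠ b.1) : Good a b := fun hc => h hc.1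

lemma good_of_snd {a b : α × Bool} (h : a.2 = b.2) : Good a b := fun hc => by
  rw [hc.2] at h; simp at h

lemma good_self (a : α × Bool) : Good a a := good_of_snd rfl

lemma reduce_eq_self : ∀ {L : List (α × Bool)}, List.Chain' Good L → FreeGroup.reduce L = L := by
  intro L h
  induction L with
  | nil => rfl
  | cons a L ih =>
    have hL := ih h.tail
    rw [FreeGroup.reduce.cons, hL]
    cases L with
    | nil => rfl
    | cons b T =>
      have hg : Good a b := (List.isChain_cons_cons.mp h).1
      simp only []
      rw [if_neg hg]

lemma exists_bad : ∀ {L : List (α × Bool)}, ¬ List.Chain' Good L →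
    ∃ (L₁ : List (α × Bool)) (x : α) (b : Bool) (L₂ : List (α × Bool)),
      L = L₁ ++ (x, b) :: (x, !b) :: L₂ := by
  intro L h
  induction L with
  | nil => exact absurd List.isChain_nil h
  | cons a L ih =>
    cases L with
    | nil => exact absurd (List.isChain_singleton a) h
    | cons b T =>
      replace h : ¬ (Good a b ∧ List.Chain' Good (b :: T)) := fun hh => h (List.isChain_cons_cons.mpr hh)
      by_cases hab : Good a b
      · have h2 : ¬ List.Chain' Good (b :: T) := fun hh => h ⟨hab, hh⟩
        obtain ⟨L₁, x, c, L₂, e⟩ := ih h2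
        exact ⟨a :: L₁, x, c, L₂, by rw [List.cons_append, e]⟩
      · have hab' : a.1 = b.1 ∧ a.2 = !b.2 := not_not.mp hab
        refine ⟨[], a.1, a.2, T, ?_⟩
        have hb : b = (a.1, !a.2) := by
          ext
          · exact hab'.1.symm
          · rw [hab'.2]; simp
        simp [← hb]
    
lemma chain'_toWord (g : FreeGroup α) : List.Chain' Good g.toWord := by
  by_contra h
  obtain ⟨L₁, x, b, L₂, hL⟩ := exists_bad h
  exact FreeGroup.reduce.not (p := False) (L₁ := g.toWord) (L₂ := L₁) (L₃ := L₂) (x := x) (b := b) (by rw [FreeGroup.reduce_toWord, hL]) |>.elim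

lemma toWord_eq {g : FreeGroup α} {L : List (α × Bool)} (h1 : g = FreeGroup.mk L)
    (h2 : List.Chain' Good L) : g.toWord = L := by
  rw [h1, FreeGroup.toWord_mk, reduce_eq_self h2]

end Infra
section PW

open FreeGroup List

abbrev Ltr : Type := Fin 3 × Bool
abbrev L3 : Type := List Ltr

/-- The word for `of k ^ n`. -/
def pw (k : Fin 3) (n : ℤ) : L3 := List.replicate n.natAbs (k, decide (0 < n))

lemma pw_zero (k : Fin 3) : pw k 0 = [] := rfl

lemma pw_cons {n : ℤ} (hn : n ≠ 0) (k : Fin 3) :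
    pw k n = (k, decide (0 < n)) :: List.replicate (n.natAbs - 1) (k, decide (0 < n)) := by
  unfold pw
  rw [show n.natAbs = n.natAbs - 1 + 1 from by omega, List.replicate_succ]
  simp [Nat.succ_sub_one]

lemma pw_one (k : Fin 3) : pw k 1 = [(k, true)] := rfl

lemma pw_neg_one (k : Fin 3) : pw k (-1) = [(k, false)] := rfl

lemma mem_head?_pw_append {k : Fin 3} {n : ℤ} {T : L3} {x : Ltr}
    (h : x ∈ (pw k n ++ T).head?) : x = (k, decide (0 < n)) ∨ x ∈ T.head? := by
  by_cases hn : n = 0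
  · subst hn; rw [pw_zero] at h; exact Or.inr h
  · rw [pw_cons hn, List.cons_append, List.head?_cons] at h
    simp only [Option.mem_some_iff] at h
    exact Or.inl h.symm

lemma mem_head?_pw_append_of_ne {k : Fin 3} {n : ℤ} {T : L3} {x : Ltr} (hn : n ≠ 0)
    (h : x ∈ (pw k n ++ T).head?) : x = (k, decide (0 < n)) := by
  rw [pw_cons hn, List.cons_append, List.head?_cons] at h
  simp only [Option.mem_some_iff] at h
  exact h.symm

lemma mem_head?_cons {T : L3} {c x : Ltr} (h : x ∈ (c :: T).head?) : x = c := by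
  simp only [List.head?_cons, Option.mem_some_iff] at h; exact h.symm

lemma chain'_replicate_append {a : Ltr} {T : L3} (hT : List.Chain' Good T)
    (hhd : ∀ x ∈ T.head?, Good a x) : ∀ m : ℕ, List.Chain' Good (List.replicate m a ++ T) := by
  intro m
  induction m with
  | zero => simpa
  | succ m ih =>
    rw [List.replicate_succ, List.cons_append]
    refine List.isChain_cons.mpr ⟨?_, ih⟩
    intro y hy
    cases m with
    | zero => exact hhd y (by simpa using hy)
    | succ m =>
      have : y = a := by
        rw [List.replicate_succ, List.cons_append, List.head?_cons] at hy
        simpa using hy.symm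
      exact this ▸ good_self a

lemma chain'_pw_append (k : Fin 3) (n : ℤ) {T : L3} (hT : List.Chain' Good T)
    (hhd : ∀ x ∈ T.head?, Good ((k, decide (0 < n)) : Ltr) x) :
    List.Chain' Good (pw k n ++ T) :=
  chain'_replicate_append hT hhd n.natAbs

lemma chain'_pw (k : Fin 3) (n : ℤ) : List.Chain' Good (pw k n) := by
  have := chain'_pw_append k n (T := []) List.isChain_nil (by simp)
  simpa using this

lemma mk_replicate_true (k : Fin 3) : ∀ m : ℕ,
    FreeGroup.mk (List.replicate m ((k, true) : Ltr)) = FreeGroup.of k ^ m := by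
  intro m
  induction m with
  | zero => rw [pow_zero]; rfl
  | succ m ih =>
    rw [List.replicate_succ, show ((k,true) : Ltr) :: List.replicate m (k,true)
      = [(k,true)] ++ List.replicate m (k,true) from rfl, ← FreeGroup.mul_mk, ih, pow_succ']
    rfl

lemma mk_pw (k : Fin 3) (n : ℤ) : FreeGroup.mk (pw k n) = FreeGroup.of k ^ n := by
  rcases n with m | m
  · cases m with
    | zero => rw [show Int.ofNat 0 = 0 from rfl, pw_zero]; rfl
    | succ m =>
      have h1 : decide (0 < (Int.ofNat (m+1))) = true := by simp
      unfold pw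
      rw [h1, show (Int.ofNat (m+1)).natAbs = m + 1 from rfl, mk_replicate_true,
        show (Int.ofNat (m+1) : ℤ) = ((m+1 : ℕ) : ℤ) from rfl, zpow_natCast]
  · have h1 : decide (0 < (Int.negSucc m)) = false := by simp
    unfold pw
    rw [h1, show (Int.negSucc m).natAbs = m + 1 from rfl]
    have h2 : (List.replicate (m+1) ((k, false) : Ltr)) =
        FreeGroup.invRev (List.replicate (m+1) ((k, true) : Ltr)) := by
      simp [FreeGroup.invRev]
    rw [h2, ← FreeGroup.inv_mk, mk_replicate_true, zpow_negSucc]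

lemma mk_pw0 (n : ℤ) : FreeGroup.mk (pw 0 n) = gx ^ n := mk_pw 0 n
lemma mk_pw1 (n : ℤ) : FreeGroup.mk (pw 1 n) = gy ^ n := mk_pw 1 n
lemma mk_pw2 (n : ℤ) : FreeGroup.mk (pw 2 n) = gz ^ n := mk_pw 2 n

end PW
section Y

open FreeGroup List

/-- Length (with sign) of the leading non-`z` run in the normal form of `sElem i ^ ±1`. -/
def rlen (ρ θ : Equiv.Perm Zstar) (i : SIdx) (e : Bool) : ℤ :=
  if e then i.1.val else (if i.2.2 then (θ i.1).val else (ρ i.1).val)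

/-- Generator index of the leading non-`z` run. -/
def rk (e : Bool) : Fin 3 := if e then 0 else 1

/-- Allowed letters after the leading run. -/
def ccond (b e : Bool) (c : Ltr) : Prop :=
  if b then c = (2, e) else (c.1 = (if e then 1 else 0) ∨ c = (2, !e))

/-- The ping-pong set: reduced words starting like `sElem i ^ ±1` does. -/
def Y (ρ θ : Equiv.Perm Zstar) (i : SIdx) (e : Bool) (g : F3) : Prop :=
  ∃ c R, ccond i.2.2 e c ∧
    g.toWord = pw 2 (-i.2.1) ++ (pw (rk e) (rlen ρ θ i e) ++ c :: R)

lemma Y_ne_one {ρ θ : Equiv.Perm Zstar} {i : SIdx} {e : Bool} {g : F3}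
    (h : Y ρ θ i e g) : g ≠ 1 := by
  obtain ⟨c, R, _, hw⟩ := h
  intro h1
  rw [h1, FreeGroup.toWord_one] at hw
  have := congrArg List.length hw
  simp at this

/-- `sElem i` or its inverse. -/
def E (ρ θ : Equiv.Perm Zstar) (i : SIdx) (e : Bool) : F3 :=
  if e then sElem ρ θ i else (sElem ρ θ i)⁻¹

lemma E_v_pos (ρ θ : Equiv.Perm Zstar) (j : Zstar) (l : ℤ) :
    E ρ θ (j, l, false) true
      = FreeGroup.of 2 ^ (-l) * (FreeGroup.of 0 ^ j.val *
        (FreeGroup.of 1 ^ (-(ρ j).val) * FreeGroup.of 2 ^ l)) := by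
  simp only [E, sElem, vgen, gx, gy, gz]
  norm_num
  group

lemma E_v_neg (ρ θ : Equiv.Perm Zstar) (j : Zstar) (l : ℤ) :
    E ρ θ (j, l, false) false
      = FreeGroup.of 2 ^ (-l) * (FreeGroup.of 1 ^ (ρ j).val *
        (FreeGroup.of 0 ^ (-j.val) * FreeGroup.of 2 ^ l)) := by
  simp only [E, sElem, vgen, gx, gy, gz]
  norm_num

lemma E_w_pos (ρ θ : Equiv.Perm Zstar) (j : Zstar) (l : ℤ) :
    E ρ θ (j, l, true) true
      = FreeGroup.of 2 ^ (-l) * (FreeGroup.of 0 ^ j.val * (FreeGroup.of 2 ^ (1:ℤ) *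
        (FreeGroup.of 1 ^ (-(θ j).val) * FreeGroup.of 2 ^ l))) := by
  simp only [E, sElem, wgen, gx, gy, gz]
  norm_num
  group

lemma E_w_neg (ρ θ : Equiv.Perm Zstar) (j : Zstar) (l : ℤ) :
    E ρ θ (j, l, true) false
      = FreeGroup.of 2 ^ (-l) * (FreeGroup.of 1 ^ (θ j).val * (FreeGroup.of 2 ^ (-1:ℤ) *
        (FreeGroup.of 0 ^ (-j.val) * FreeGroup.of 2 ^ l))) := by
  simp only [E, sElem, wgen, gx, gy, gz]
  norm_num

end Y
section MemH
open FreeGroup List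
lemma mem_head?_pw {k : Fin 3} {n : ℤ} {x : Ltr} (hn : n ≠ 0)
    (h : x ∈ (pw k n).head?) : x = (k, decide (0 < n)) := by
  rw [pw_cons hn, List.head?_cons] at h
  simp only [Option.mem_some_iff] at h
  exact h.symm

lemma mem_head?_pw' {k : Fin 3} {n : ℤ} {x : Ltr}
    (h : x ∈ (pw k n).head?) : x = (k, decide (0 < n)) := by
  by_cases hn : n = 0
  · subst hn; rw [pw_zero] at h; simp at h
  · exact mem_head?_pw hn h

lemma good_mk {k k' : Fin 3} {b b' : Bool} (h : k ≠ k') : Good ((k, b) : Ltr) (k', b') :=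
  good_of_ne h

lemma good_mk_snd {k k' : Fin 3} {b : Bool} : Good ((k, b) : Ltr) (k', b) :=
  good_of_snd rfl
end MemH
section Base

open FreeGroup List

lemma base (ρ θ : Equiv.Perm Zstar) (j : Zstar) (l : ℤ) (b e : Bool) :
    Y ρ θ (j, l, b) e (E ρ θ (j, l, b) e) := by
  cases b <;> cases e
  · -- v⁻
    show Y ρ θ (j, l, false) false _
    have hprod : E ρ θ (j, l, false) false
        = FreeGroup.mk (pw 2 (-l) ++ (pw 1 (ρ j).val ++ (pw 0 (-j.val) ++ pw 2 l))) := by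
      rw [E_v_neg]; simp only [← FreeGroup.mul_mk, mk_pw]
    have hch : List.Chain' Good (pw 2 (-l) ++ (pw 1 (ρ j).val ++ (pw 0 (-j.val) ++ pw 2 l))) := by
      refine chain'_pw_append _ _ (chain'_pw_append _ _ (chain'_pw_append _ _ (chain'_pw _ _) ?_) ?_) ?_
      · intro x hx
        rw [mem_head?_pw' hx]; exact good_mk (by decide)
      · intro x hx
        rw [mem_head?_pw_append_of_ne (by simpa using j.2) hx]; exact good_mk (by decide)
      · intro x hx
        rw [mem_head?_pw_append_of_ne (ρ j).2 hx]; exact good_mk (by decide)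
    refine ⟨(0, decide (0 < -j.val)),
      List.replicate ((-j.val).natAbs - 1) (0, decide (0 < -j.val)) ++ pw 2 l, Or.inl rfl, ?_⟩
    show _ = pw 2 (-l) ++ (pw 1 (ρ j).val ++ ((0, decide (0 < -j.val)) :: _))
    rw [toWord_eq hprod hch, pw_cons (by simpa using j.2) 0]
    simp [List.cons_append]
  · -- v⁺
    show Y ρ θ (j, l, false) true _
    have hprod : E ρ θ (j, l, false) true
        = FreeGroup.mk (pw 2 (-l) ++ (pw 0 j.val ++ (pw 1 (-(ρ j).val) ++ pw 2 l))) := by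
      rw [E_v_pos]; simp only [← FreeGroup.mul_mk, mk_pw]
    have hch : List.Chain' Good (pw 2 (-l) ++ (pw 0 j.val ++ (pw 1 (-(ρ j).val) ++ pw 2 l))) := by
      refine chain'_pw_append _ _ (chain'_pw_append _ _ (chain'_pw_append _ _ (chain'_pw _ _) ?_) ?_) ?_
      · intro x hx
        rw [mem_head?_pw' hx]; exact good_mk (by decide)
      · intro x hx
        rw [mem_head?_pw_append_of_ne (by simpa using (ρ j).2) hx]; exact good_mk (by decide)
      · intro x hx
        rw [mem_head?_pw_append_of_ne j.2 hx]; exact good_mk (by decide)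
    refine ⟨(1, decide (0 < -(ρ j).val)),
      List.replicate ((-(ρ j).val).natAbs - 1) (1, decide (0 < -(ρ j).val)) ++ pw 2 l, Or.inl rfl, ?_⟩
    show _ = pw 2 (-l) ++ (pw 0 j.val ++ ((1, decide (0 < -(ρ j).val)) :: _))
    rw [toWord_eq hprod hch, pw_cons (by simpa using (ρ j).2) 1]
    simp [List.cons_append]
  · -- w⁻
    show Y ρ θ (j, l, true) false _
    have hprod : E ρ θ (j, l, true) false
        = FreeGroup.mk (pw 2 (-l) ++ (pw 1 (θ j).val ++ (pw 2 (-1) ++ (pw 0 (-j.val) ++ pw 2 l)))) := by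
      rw [E_w_neg]; simp only [← FreeGroup.mul_mk, mk_pw]
    have hch : List.Chain' Good
        (pw 2 (-l) ++ (pw 1 (θ j).val ++ (pw 2 (-1) ++ (pw 0 (-j.val) ++ pw 2 l)))) := by
      refine chain'_pw_append _ _ (chain'_pw_append _ _ (chain'_pw_append _ _
        (chain'_pw_append _ _ (chain'_pw _ _) ?_) ?_) ?_) ?_
      · intro x hx
        rw [mem_head?_pw' hx]; exact good_mk (by decide)
      · intro x hx
        rw [mem_head?_pw_append_of_ne (by simpa using j.2) hx]; exact good_mk (by decide)
      · intro x hx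
        rw [mem_head?_pw_append_of_ne (by decide) hx]; exact good_mk (by decide)
      · intro x hx
        rw [mem_head?_pw_append_of_ne (θ j).2 hx]; exact good_mk (by decide)
    refine ⟨(2, false), pw 0 (-j.val) ++ pw 2 l, rfl, ?_⟩
    show _ = pw 2 (-l) ++ (pw 1 (θ j).val ++ ((2, false) :: _))
    rw [toWord_eq hprod hch, pw_neg_one]
    simp [List.cons_append]
  · -- w⁺
    show Y ρ θ (j, l, true) true _
    have hprod : E ρ θ (j, l, true) true
        = FreeGroup.mk (pw 2 (-l) ++ (pw 0 j.val ++ (pw 2 1 ++ (pw 1 (-(θ j).val) ++ pw 2 l)))) := by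
      rw [E_w_pos]; simp only [← FreeGroup.mul_mk, mk_pw]
    have hch : List.Chain' Good
        (pw 2 (-l) ++ (pw 0 j.val ++ (pw 2 1 ++ (pw 1 (-(θ j).val) ++ pw 2 l)))) := by
      refine chain'_pw_append _ _ (chain'_pw_append _ _ (chain'_pw_append _ _
        (chain'_pw_append _ _ (chain'_pw _ _) ?_) ?_) ?_) ?_
      · intro x hx
        rw [mem_head?_pw' hx]; exact good_mk (by decide)
      · intro x hx
        rw [mem_head?_pw_append_of_ne (by simpa using (θ j).2) hx]; exact good_mk (by decide)
      · intro x hx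
        rw [mem_head?_pw_append_of_ne (by decide) hx]; exact good_mk (by decide)
      · intro x hx
        rw [mem_head?_pw_append_of_ne j.2 hx]; exact good_mk (by decide)
    refine ⟨(2, true), pw 1 (-(θ j).val) ++ pw 2 l, rfl, ?_⟩
    show _ = pw 2 (-l) ++ (pw 0 j.val ++ ((2, true) :: _))
    rw [toWord_eq hprod hch, pw_one]
    simp [List.cons_append]

end Base
section Step

open FreeGroup List

set_option maxHeartbeats 1000000 in
lemma step (ρ θ : Equiv.Perm Zstar) (j : Zstar) (l : ℤ) (b₁ e₁ : Bool) (i₂ : SIdx) (e₂ : Bool)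
    (hne : ¬(i₂ = (j, l, b₁) ∧ e₂ = !e₁)) {g : F3} (hg : Y ρ θ i₂ e₂ g) :
    Y ρ θ (j, l, b₁) e₁ (E ρ θ (j, l, b₁) e₁ * g) := by
  obtain ⟨j₂, l₂, b₂⟩ := i₂
  obtain ⟨c, R, hc, hw⟩ := hg
  have hctw := chain'_toWord g
  rw [hw] at hctw
  have hTail := (List.isChain_append.mp hctw).2.1
  have hcR : List.Chain' Good (c :: R) := (List.isChain_append.mp hTail).2.1
  have hg2 : g = FreeGroup.of 2 ^ (-l₂) *
      (FreeGroup.of (rk e₂) ^ (rlen ρ θ (j₂, l₂, b₂) e₂) * FreeGroup.mk (c :: R)) := by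
    conv_lhs => rw [← FreeGroup.mk_toWord (x := g), hw]
    simp only [← FreeGroup.mul_mk, mk_pw]
  cases e₂
  · -- e₂ = false : the tail starts with a y-run of (signed) length M
    rw [show rk false = 1 from rfl] at hg2 hw hTail
    have hm : rlen ρ θ (j₂, l₂, b₂) false ≠ 0 := by
      cases b₂
      · exact (ρ j₂).2
      · exact (θ j₂).2
    have hc1 : c.1 ≠ 1 := by
      cases b₂
      · replace hc : c.1 = 0 ∨ c = (2, true) := hc
        rcases hc with h | h
        · rw [h]; decide
        · rw [h]; decide
      · replace hc : c = (2, false) := hc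
        rw [hc]; decide
    cases b₁ <;> cases e₁
    · -- v⁻, tail starts with a y-run : no interaction
      refine ⟨(0, decide (0 < -j.val)),
        List.replicate ((-j.val).natAbs - 1) (0, decide (0 < -j.val)) ++
          (pw 2 (l - l₂) ++ (pw 1 (rlen ρ θ (j₂, l₂, b₂) false) ++ (c :: R))),
        Or.inl rfl, ?_⟩
      show _ = pw 2 (-l) ++ (pw 1 (ρ j).val ++ ((0, _) :: _))
      have hprod : E ρ θ (j, l, false) false * g
          = FreeGroup.mk (pw 2 (-l) ++ (pw 1 (ρ j).val ++ (pw 0 (-j.val) ++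
              (pw 2 (l - l₂) ++ (pw 1 (rlen ρ θ (j₂, l₂, b₂) false) ++ (c :: R)))))) := by
        have hmk : FreeGroup.mk (pw 2 (-l) ++ (pw 1 (ρ j).val ++ (pw 0 (-j.val) ++
              (pw 2 (l - l₂) ++ (pw 1 (rlen ρ θ (j₂, l₂, b₂) false) ++ (c :: R))))))
            = FreeGroup.of 2 ^ (-l) * (FreeGroup.of 1 ^ (ρ j).val *
                (FreeGroup.of 0 ^ (-j.val) * (FreeGroup.of 2 ^ (l - l₂) *
                  (FreeGroup.of 1 ^ (rlen ρ θ (j₂, l₂, b₂) false) *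
                    FreeGroup.mk (c :: R))))) := by
          simp only [← FreeGroup.mul_mk, mk_pw]
        rw [E_v_neg, hg2, hmk]
        group
      have hch : List.Chain' Good (pw 2 (-l) ++ (pw 1 (ρ j).val ++ (pw 0 (-j.val) ++
          (pw 2 (l - l₂) ++ (pw 1 (rlen ρ θ (j₂, l₂, b₂) false) ++ (c :: R)))))) := by
        refine chain'_pw_append _ _ (chain'_pw_append _ _ (chain'_pw_append _ _
          (chain'_pw_append _ _ hTail ?_) ?_) ?_) ?_
        · intro x hx
          rw [mem_head?_pw_append_of_ne hm hx]; exact good_mk (by decide)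
        · intro x hx
          rcases mem_head?_pw_append hx with rfl | hx
          · exact good_mk (by decide)
          · rw [mem_head?_pw_append_of_ne hm hx]; exact good_mk (by decide)
        · intro x hx
          rw [mem_head?_pw_append_of_ne (by simpa using j.2) hx]; exact good_mk (by decide)
        · intro x hx
          rw [mem_head?_pw_append_of_ne (ρ j).2 hx]; exact good_mk (by decide)
      rw [toWord_eq hprod hch, pw_cons (by simpa using j.2) 0]
      simp [List.cons_append]
    · -- v⁺ with y-run tail : cancellation
      by_cases hl : l₂ = l
      · subst hl
        by_cases hs : rlen ρ θ (j₂, l₂, b₂) false = (ρ j).val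
        · -- full cancellation of the y-run
          cases b₂
          · -- excluded: same generator, inverse exponent
            exfalso
            have hs' : (ρ j₂).val = (ρ j).val := hs
            have : j₂ = j := ρ.injective (Subtype.ext hs')
            exact hne ⟨by rw [this], rfl⟩
          · -- tail comes from a w-type generator
            replace hc : c = (2, false) := hc
            subst hc
            refine ⟨(2, false), R, Or.inr rfl, ?_⟩
            have hprod : E ρ θ (j, l₂, false) true * g
                = FreeGroup.mk (pw 2 (-l₂) ++ (pw 0 j.val ++ ((2, false) :: R))) := by
              have hmk : FreeGroup.mk (pw 2 (-l₂) ++ (pw 0 j.val ++ ((2, false) :: R)))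
                  = FreeGroup.of 2 ^ (-l₂) * (FreeGroup.of 0 ^ j.val
                    * FreeGroup.mk ((2, false) :: R)) := by
                simp only [← FreeGroup.mul_mk, mk_pw]
              rw [E_v_pos, hg2, hmk, hs]
              group
            have hch : List.Chain' Good (pw 2 (-l₂) ++ (pw 0 j.val ++ ((2, false) :: R))) := by
              refine chain'_pw_append _ _ (chain'_pw_append _ _ hcR ?_) ?_
              · intro x hx
                rw [mem_head?_cons hx]; exact good_mk (by decide)
              · intro x hx
                rw [mem_head?_pw_append_of_ne j.2 hx]; exact good_mk (by decide)
            exact toWord_eq hprod hch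
        · -- partial cancellation: a y-run of length M - ρ(j) survives
          have hs' : rlen ρ θ (j₂, l₂, b₂) false - (ρ j).val ≠ 0 := sub_ne_zero.mpr hs
          refine ⟨(1, decide (0 < rlen ρ θ (j₂, l₂, b₂) false - (ρ j).val)),
            List.replicate ((rlen ρ θ (j₂, l₂, b₂) false - (ρ j).val).natAbs - 1)
              (1, decide (0 < rlen ρ θ (j₂, l₂, b₂) false - (ρ j).val)) ++ (c :: R),
            Or.inl rfl, ?_⟩
          show _ = pw 2 (-l₂) ++ (pw 0 j.val ++ ((1, _) :: _))
          have hprod : E ρ θ (j, l₂, false) true * g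
              = FreeGroup.mk (pw 2 (-l₂) ++ (pw 0 j.val ++
                  (pw 1 (rlen ρ θ (j₂, l₂, b₂) false - (ρ j).val) ++ (c :: R)))) := by
            have hmk : FreeGroup.mk (pw 2 (-l₂) ++ (pw 0 j.val ++
                  (pw 1 (rlen ρ θ (j₂, l₂, b₂) false - (ρ j).val) ++ (c :: R))))
                = FreeGroup.of 2 ^ (-l₂) * (FreeGroup.of 0 ^ j.val *
                    (FreeGroup.of 1 ^ (rlen ρ θ (j₂, l₂, b₂) false - (ρ j).val) *
                      FreeGroup.mk (c :: R))) := by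
              simp only [← FreeGroup.mul_mk, mk_pw]
            rw [E_v_pos, hg2, hmk]
            group
          have hch : List.Chain' Good (pw 2 (-l₂) ++ (pw 0 j.val ++
              (pw 1 (rlen ρ θ (j₂, l₂, b₂) false - (ρ j).val) ++ (c :: R)))) := by
            refine chain'_pw_append _ _ (chain'_pw_append _ _ (chain'_pw_append _ _ hcR ?_) ?_) ?_
            · intro x hx
              rw [mem_head?_cons hx]; exact good_of_ne (Ne.symm hc1)
            · intro x hx
              rw [mem_head?_pw_append_of_ne hs' hx]; exact good_mk (by decide)
            · intro x hx
              rw [mem_head?_pw_append_of_ne j.2 hx]; exact good_mk (by decide)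
          rw [toWord_eq hprod hch, pw_cons hs' 1]
          simp [List.cons_append]
      · -- different conjugating level : no interaction
        have hd : l - l₂ ≠ 0 := sub_ne_zero.mpr (fun h => hl h.symm)
        refine ⟨(1, decide (0 < -(ρ j).val)),
          List.replicate ((-(ρ j).val).natAbs - 1) (1, decide (0 < -(ρ j).val)) ++
            (pw 2 (l - l₂) ++ (pw 1 (rlen ρ θ (j₂, l₂, b₂) false) ++ (c :: R))),
          Or.inl rfl, ?_⟩
        show _ = pw 2 (-l) ++ (pw 0 j.val ++ ((1, _) :: _))
        have hprod : E ρ θ (j, l, false) true * g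
            = FreeGroup.mk (pw 2 (-l) ++ (pw 0 j.val ++ (pw 1 (-(ρ j).val) ++
                (pw 2 (l - l₂) ++ (pw 1 (rlen ρ θ (j₂, l₂, b₂) false) ++ (c :: R)))))) := by
          have hmk : FreeGroup.mk (pw 2 (-l) ++ (pw 0 j.val ++ (pw 1 (-(ρ j).val) ++
                (pw 2 (l - l₂) ++ (pw 1 (rlen ρ θ (j₂, l₂, b₂) false) ++ (c :: R))))))
              = FreeGroup.of 2 ^ (-l) * (FreeGroup.of 0 ^ j.val *
                  (FreeGroup.of 1 ^ (-(ρ j).val) * (FreeGroup.of 2 ^ (l - l₂) *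
                    (FreeGroup.of 1 ^ (rlen ρ θ (j₂, l₂, b₂) false) *
                      FreeGroup.mk (c :: R))))) := by
            simp only [← FreeGroup.mul_mk, mk_pw]
          rw [E_v_pos, hg2, hmk]
          group
        have hch : List.Chain' Good (pw 2 (-l) ++ (pw 0 j.val ++ (pw 1 (-(ρ j).val) ++
            (pw 2 (l - l₂) ++ (pw 1 (rlen ρ θ (j₂, l₂, b₂) false) ++ (c :: R)))))) := by
          refine chain'_pw_append _ _ (chain'_pw_append _ _ (chain'_pw_append _ _
            (chain'_pw_append _ _ hTail ?_) ?_) ?_) ?_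
          · intro x hx
            rw [mem_head?_pw_append_of_ne hm hx]; exact good_mk (by decide)
          · intro x hx
            rw [mem_head?_pw_append_of_ne hd hx]; exact good_mk (by decide)
          · intro x hx
            rw [mem_head?_pw_append_of_ne (by simpa using (ρ j).2) hx]
            exact good_mk (by decide)
          · intro x hx
            rw [mem_head?_pw_append_of_ne j.2 hx]; exact good_mk (by decide)
        rw [toWord_eq hprod hch, pw_cons (by simpa using (ρ j).2) 1]
        simp [List.cons_append]
    · -- w⁻, tail starts with a y-run : no interaction
      refine ⟨(2, false), pw 0 (-j.val) ++
          (pw 2 (l - l₂) ++ (pw 1 (rlen ρ θ (j₂, l₂, b₂) false) ++ (c :: R))), rfl, ?_⟩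
      show _ = pw 2 (-l) ++ (pw 1 (θ j).val ++ ((2, false) :: _))
      have hprod : E ρ θ (j, l, true) false * g
          = FreeGroup.mk (pw 2 (-l) ++ (pw 1 (θ j).val ++ (pw 2 (-1) ++ (pw 0 (-j.val) ++
              (pw 2 (l - l₂) ++ (pw 1 (rlen ρ θ (j₂, l₂, b₂) false) ++ (c :: R))))))) := by
        have hmk : FreeGroup.mk (pw 2 (-l) ++ (pw 1 (θ j).val ++ (pw 2 (-1) ++ (pw 0 (-j.val) ++
              (pw 2 (l - l₂) ++ (pw 1 (rlen ρ θ (j₂, l₂, b₂) false) ++ (c :: R)))))))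
            = FreeGroup.of 2 ^ (-l) * (FreeGroup.of 1 ^ (θ j).val *
                (FreeGroup.of 2 ^ (-1 : ℤ) * (FreeGroup.of 0 ^ (-j.val) *
                  (FreeGroup.of 2 ^ (l - l₂) *
                    (FreeGroup.of 1 ^ (rlen ρ θ (j₂, l₂, b₂) false) *
                      FreeGroup.mk (c :: R)))))) := by
          simp only [← FreeGroup.mul_mk, mk_pw]
        rw [E_w_neg, hg2, hmk]
        group
      have hch : List.Chain' Good (pw 2 (-l) ++ (pw 1 (θ j).val ++ (pw 2 (-1) ++
          (pw 0 (-j.val) ++ (pw 2 (l - l₂) ++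
            (pw 1 (rlen ρ θ (j₂, l₂, b₂) false) ++ (c :: R))))))) := by
        refine chain'_pw_append _ _ (chain'_pw_append _ _ (chain'_pw_append _ _
          (chain'_pw_append _ _ (chain'_pw_append _ _ hTail ?_) ?_) ?_) ?_) ?_
        · intro x hx
          rw [mem_head?_pw_append_of_ne hm hx]; exact good_mk (by decide)
        · intro x hx
          rcases mem_head?_pw_append hx with rfl | hx
          · exact good_mk (by decide)
          · rw [mem_head?_pw_append_of_ne hm hx]; exact good_mk (by decide)
        · intro x hx
          rw [mem_head?_pw_append_of_ne (by simpa using j.2) hx]; exact good_mk (by decide)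
        · intro x hx
          rw [mem_head?_pw_append_of_ne (by decide) hx]; exact good_mk (by decide)
        · intro x hx
          rw [mem_head?_pw_append_of_ne (θ j).2 hx]; exact good_mk (by decide)
      rw [toWord_eq hprod hch, pw_neg_one]
      simp [List.cons_append]
    · -- w⁺ with y-run tail : cancellation
      by_cases hl : l₂ = l
      · subst hl
        by_cases hs : rlen ρ θ (j₂, l₂, b₂) false = (θ j).val
        · -- full cancellation of the y-run
          cases b₂
          · -- tail comes from a v-type generator : `z` survives
            replace hc : c.1 = 0 ∨ c = (2, true) := hc
            refine ⟨(2, true), c :: R, rfl, ?_⟩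
            show _ = pw 2 (-l₂) ++ (pw 0 j.val ++ ((2, true) :: _))
            have hprod : E ρ θ (j, l₂, true) true * g
                = FreeGroup.mk (pw 2 (-l₂) ++ (pw 0 j.val ++ (pw 2 1 ++ (c :: R)))) := by
              have hmk : FreeGroup.mk (pw 2 (-l₂) ++ (pw 0 j.val ++ (pw 2 1 ++ (c :: R))))
                  = FreeGroup.of 2 ^ (-l₂) * (FreeGroup.of 0 ^ j.val *
                      (FreeGroup.of 2 ^ (1 : ℤ) * FreeGroup.mk (c :: R))) := by
                simp only [← FreeGroup.mul_mk, mk_pw]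
              rw [E_w_pos, hg2, hmk, hs]
              group
            have hch : List.Chain' Good
                (pw 2 (-l₂) ++ (pw 0 j.val ++ (pw 2 1 ++ (c :: R)))) := by
              refine chain'_pw_append _ _ (chain'_pw_append _ _
                (chain'_pw_append _ _ hcR ?_) ?_) ?_
              · intro x hx
                rw [mem_head?_cons hx]
                rcases hc with h | h
                · exact good_of_ne (by rw [h]; decide)
                · rw [h]; exact good_mk_snd
              · intro x hx
                rw [mem_head?_pw_append_of_ne (by decide) hx]; exact good_mk (by decide)
              · intro x hx
                rw [mem_head?_pw_append_of_ne j.2 hx]; exact good_mk (by decide)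
            rw [toWord_eq hprod hch, pw_one]
            simp [List.cons_append]
          · -- excluded: same generator, inverse exponent
            exfalso
            have hs' : (θ j₂).val = (θ j).val := hs
            have : j₂ = j := θ.injective (Subtype.ext hs')
            exact hne ⟨by rw [this], rfl⟩
        · -- partial cancellation
          have hs' : rlen ρ θ (j₂, l₂, b₂) false - (θ j).val ≠ 0 := sub_ne_zero.mpr hs
          refine ⟨(2, true), pw 1 (rlen ρ θ (j₂, l₂, b₂) false - (θ j).val) ++ (c :: R),
            rfl, ?_⟩
          show _ = pw 2 (-l₂) ++ (pw 0 j.val ++ ((2, true) :: _))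
          have hprod : E ρ θ (j, l₂, true) true * g
              = FreeGroup.mk (pw 2 (-l₂) ++ (pw 0 j.val ++ (pw 2 1 ++
                  (pw 1 (rlen ρ θ (j₂, l₂, b₂) false - (θ j).val) ++ (c :: R))))) := by
            have hmk : FreeGroup.mk (pw 2 (-l₂) ++ (pw 0 j.val ++ (pw 2 1 ++
                  (pw 1 (rlen ρ θ (j₂, l₂, b₂) false - (θ j).val) ++ (c :: R)))))
                = FreeGroup.of 2 ^ (-l₂) * (FreeGroup.of 0 ^ j.val *
                    (FreeGroup.of 2 ^ (1 : ℤ) *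
                      (FreeGroup.of 1 ^ (rlen ρ θ (j₂, l₂, b₂) false - (θ j).val) *
                        FreeGroup.mk (c :: R)))) := by
              simp only [← FreeGroup.mul_mk, mk_pw]
            rw [E_w_pos, hg2, hmk]
            group
          have hch : List.Chain' Good (pw 2 (-l₂) ++ (pw 0 j.val ++ (pw 2 1 ++
              (pw 1 (rlen ρ θ (j₂, l₂, b₂) false - (θ j).val) ++ (c :: R))))) := by
            refine chain'_pw_append _ _ (chain'_pw_append _ _ (chain'_pw_append _ _
              (chain'_pw_append _ _ hcR ?_) ?_) ?_) ?_
            · intro x hx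
              rw [mem_head?_cons hx]; exact good_of_ne (Ne.symm hc1)
            · intro x hx
              rw [mem_head?_pw_append_of_ne hs' hx]; exact good_mk (by decide)
            · intro x hx
              rw [mem_head?_pw_append_of_ne (by decide) hx]; exact good_mk (by decide)
            · intro x hx
              rw [mem_head?_pw_append_of_ne j.2 hx]; exact good_mk (by decide)
          rw [toWord_eq hprod hch, pw_one]
          simp [List.cons_append]
      · -- different conjugating level : no interaction
        have hd : l - l₂ ≠ 0 := sub_ne_zero.mpr (fun h => hl h.symm)
        refine ⟨(2, true), pw 1 (-(θ j).val) ++ (pw 2 (l - l₂) ++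
            (pw 1 (rlen ρ θ (j₂, l₂, b₂) false) ++ (c :: R))), rfl, ?_⟩
        show _ = pw 2 (-l) ++ (pw 0 j.val ++ ((2, true) :: _))
        have hprod : E ρ θ (j, l, true) true * g
            = FreeGroup.mk (pw 2 (-l) ++ (pw 0 j.val ++ (pw 2 1 ++ (pw 1 (-(θ j).val) ++
                (pw 2 (l - l₂) ++ (pw 1 (rlen ρ θ (j₂, l₂, b₂) false) ++ (c :: R))))))) := by
          have hmk : FreeGroup.mk (pw 2 (-l) ++ (pw 0 j.val ++ (pw 2 1 ++ (pw 1 (-(θ j).val) ++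
                (pw 2 (l - l₂) ++ (pw 1 (rlen ρ θ (j₂, l₂, b₂) false) ++ (c :: R)))))))
              = FreeGroup.of 2 ^ (-l) * (FreeGroup.of 0 ^ j.val *
                  (FreeGroup.of 2 ^ (1 : ℤ) * (FreeGroup.of 1 ^ (-(θ j).val) *
                    (FreeGroup.of 2 ^ (l - l₂) *
                      (FreeGroup.of 1 ^ (rlen ρ θ (j₂, l₂, b₂) false) *
                        FreeGroup.mk (c :: R)))))) := by
            simp only [← FreeGroup.mul_mk, mk_pw]
          rw [E_w_pos, hg2, hmk]
          group
        have hch : List.Chain' Good (pw 2 (-l) ++ (pw 0 j.val ++ (pw 2 1 ++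
            (pw 1 (-(θ j).val) ++ (pw 2 (l - l₂) ++
              (pw 1 (rlen ρ θ (j₂, l₂, b₂) false) ++ (c :: R))))))) := by
          refine chain'_pw_append _ _ (chain'_pw_append _ _ (chain'_pw_append _ _
            (chain'_pw_append _ _ (chain'_pw_append _ _ hTail ?_) ?_) ?_) ?_) ?_
          · intro x hx
            rw [mem_head?_pw_append_of_ne hm hx]; exact good_mk (by decide)
          · intro x hx
            rw [mem_head?_pw_append_of_ne hd hx]; exact good_mk (by decide)
          · intro x hx
            rw [mem_head?_pw_append_of_ne (by simpa using (θ j).2) hx]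
            exact good_mk (by decide)
          · intro x hx
            rw [mem_head?_pw_append_of_ne (by decide) hx]; exact good_mk (by decide)
          · intro x hx
            rw [mem_head?_pw_append_of_ne j.2 hx]; exact good_mk (by decide)
        rw [toWord_eq hprod hch, pw_one]
        simp [List.cons_append]
  · -- e₂ = true : the tail starts with an x-run of (signed) length j₂
    rw [show rk true = 0 from rfl,
      show rlen ρ θ (j₂, l₂, b₂) true = j₂.val from rfl] at hg2 hw hTail
    have hc0 : c.1 ≠ 0 := by
      cases b₂
      · replace hc : c.1 = 1 ∨ c = (2, false) := hc
        rcases hc with h | h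
        · rw [h]; decide
        · rw [h]; decide
      · replace hc : c = (2, true) := hc
        rw [hc]; decide
    cases b₁ <;> cases e₁
    · -- v⁻ with x-run tail : cancellation
      by_cases hl : l₂ = l
      · subst hl
        by_cases hs : j₂.val = j.val
        · -- full cancellation of the x-run
          cases b₂
          · -- excluded: same generator, inverse exponent
            exfalso
            exact hne ⟨by rw [Subtype.ext hs], rfl⟩
          · -- tail comes from a w-type generator
            replace hc : c = (2, true) := hc
            subst hc
            refine ⟨(2, true), R, Or.inr rfl, ?_⟩
            show _ = pw 2 (-l₂) ++ (pw 1 (ρ j).val ++ ((2, true) :: _))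
            have hprod : E ρ θ (j, l₂, false) false * g
                = FreeGroup.mk (pw 2 (-l₂) ++ (pw 1 (ρ j).val ++ ((2, true) :: R))) := by
              have hmk : FreeGroup.mk (pw 2 (-l₂) ++ (pw 1 (ρ j).val ++ ((2, true) :: R)))
                  = FreeGroup.of 2 ^ (-l₂) * (FreeGroup.of 1 ^ (ρ j).val *
                      FreeGroup.mk ((2, true) :: R)) := by
                simp only [← FreeGroup.mul_mk, mk_pw]
              rw [E_v_neg, hg2, hmk, hs]
              group
            have hch : List.Chain' Good
                (pw 2 (-l₂) ++ (pw 1 (ρ j).val ++ ((2, true) :: R))) := by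
              refine chain'_pw_append _ _ (chain'_pw_append _ _ hcR ?_) ?_
              · intro x hx
                rw [mem_head?_cons hx]; exact good_mk (by decide)
              · intro x hx
                rw [mem_head?_pw_append_of_ne (ρ j).2 hx]; exact good_mk (by decide)
            exact toWord_eq hprod hch
        · -- partial cancellation: an x-run of length j₂ - j survives
          have hs' : j₂.val - j.val ≠ 0 := sub_ne_zero.mpr hs
          refine ⟨(0, decide (0 < j₂.val - j.val)),
            List.replicate ((j₂.val - j.val).natAbs - 1)
              (0, decide (0 < j₂.val - j.val)) ++ (c :: R), Or.inl rfl, ?_⟩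
          show _ = pw 2 (-l₂) ++ (pw 1 (ρ j).val ++ ((0, _) :: _))
          have hprod : E ρ θ (j, l₂, false) false * g
              = FreeGroup.mk (pw 2 (-l₂) ++ (pw 1 (ρ j).val ++
                  (pw 0 (j₂.val - j.val) ++ (c :: R)))) := by
            have hmk : FreeGroup.mk (pw 2 (-l₂) ++ (pw 1 (ρ j).val ++
                  (pw 0 (j₂.val - j.val) ++ (c :: R))))
                = FreeGroup.of 2 ^ (-l₂) * (FreeGroup.of 1 ^ (ρ j).val *
                    (FreeGroup.of 0 ^ (j₂.val - j.val) * FreeGroup.mk (c :: R))) := by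
              simp only [← FreeGroup.mul_mk, mk_pw]
            rw [E_v_neg, hg2, hmk]
            group
          have hch : List.Chain' Good (pw 2 (-l₂) ++ (pw 1 (ρ j).val ++
              (pw 0 (j₂.val - j.val) ++ (c :: R)))) := by
            refine chain'_pw_append _ _ (chain'_pw_append _ _
              (chain'_pw_append _ _ hcR ?_) ?_) ?_
            · intro x hx
              rw [mem_head?_cons hx]; exact good_of_ne (Ne.symm hc0)
            · intro x hx
              rw [mem_head?_pw_append_of_ne hs' hx]; exact good_mk (by decide)
            · intro x hx
              rw [mem_head?_pw_append_of_ne (ρ j).2 hx]; exact good_mk (by decide)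
          rw [toWord_eq hprod hch, pw_cons hs' 0]
          simp [List.cons_append]
      · -- different conjugating level : no interaction
        have hd : l - l₂ ≠ 0 := sub_ne_zero.mpr (fun h => hl h.symm)
        refine ⟨(0, decide (0 < -j.val)),
          List.replicate ((-j.val).natAbs - 1) (0, decide (0 < -j.val)) ++
            (pw 2 (l - l₂) ++ (pw 0 j₂.val ++ (c :: R))), Or.inl rfl, ?_⟩
        show _ = pw 2 (-l) ++ (pw 1 (ρ j).val ++ ((0, _) :: _))
        have hprod : E ρ θ (j, l, false) false * g
            = FreeGroup.mk (pw 2 (-l) ++ (pw 1 (ρ j).val ++ (pw 0 (-j.val) ++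
                (pw 2 (l - l₂) ++ (pw 0 j₂.val ++ (c :: R)))))) := by
          have hmk : FreeGroup.mk (pw 2 (-l) ++ (pw 1 (ρ j).val ++ (pw 0 (-j.val) ++
                (pw 2 (l - l₂) ++ (pw 0 j₂.val ++ (c :: R))))))
              = FreeGroup.of 2 ^ (-l) * (FreeGroup.of 1 ^ (ρ j).val *
                  (FreeGroup.of 0 ^ (-j.val) * (FreeGroup.of 2 ^ (l - l₂) *
                    (FreeGroup.of 0 ^ j₂.val * FreeGroup.mk (c :: R))))) := by
            simp only [← FreeGroup.mul_mk, mk_pw]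
          rw [E_v_neg, hg2, hmk]
          group
        have hch : List.Chain' Good (pw 2 (-l) ++ (pw 1 (ρ j).val ++ (pw 0 (-j.val) ++
            (pw 2 (l - l₂) ++ (pw 0 j₂.val ++ (c :: R)))))) := by
          refine chain'_pw_append _ _ (chain'_pw_append _ _ (chain'_pw_append _ _
            (chain'_pw_append _ _ hTail ?_) ?_) ?_) ?_
          · intro x hx
            rw [mem_head?_pw_append_of_ne j₂.2 hx]; exact good_mk (by decide)
          · intro x hx
            rw [mem_head?_pw_append_of_ne hd hx]; exact good_mk (by decide)
          · intro x hx
            rw [mem_head?_pw_append_of_ne (by simpa using j.2) hx]; exact good_mk (by decide)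
          · intro x hx
            rw [mem_head?_pw_append_of_ne (ρ j).2 hx]; exact good_mk (by decide)
        rw [toWord_eq hprod hch, pw_cons (by simpa using j.2) 0]
        simp [List.cons_append]
    · -- v⁺, tail starts with an x-run : no interaction
      refine ⟨(1, decide (0 < -(ρ j).val)),
        List.replicate ((-(ρ j).val).natAbs - 1) (1, decide (0 < -(ρ j).val)) ++
          (pw 2 (l - l₂) ++ (pw 0 j₂.val ++ (c :: R))), Or.inl rfl, ?_⟩
      show _ = pw 2 (-l) ++ (pw 0 j.val ++ ((1, _) :: _))
      have hprod : E ρ θ (j, l, false) true * g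
          = FreeGroup.mk (pw 2 (-l) ++ (pw 0 j.val ++ (pw 1 (-(ρ j).val) ++
              (pw 2 (l - l₂) ++ (pw 0 j₂.val ++ (c :: R)))))) := by
        have hmk : FreeGroup.mk (pw 2 (-l) ++ (pw 0 j.val ++ (pw 1 (-(ρ j).val) ++
              (pw 2 (l - l₂) ++ (pw 0 j₂.val ++ (c :: R))))))
            = FreeGroup.of 2 ^ (-l) * (FreeGroup.of 0 ^ j.val *
                (FreeGroup.of 1 ^ (-(ρ j).val) * (FreeGroup.of 2 ^ (l - l₂) *
                  (FreeGroup.of 0 ^ j₂.val * FreeGroup.mk (c :: R))))) := by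
          simp only [← FreeGroup.mul_mk, mk_pw]
        rw [E_v_pos, hg2, hmk]
        group
      have hch : List.Chain' Good (pw 2 (-l) ++ (pw 0 j.val ++ (pw 1 (-(ρ j).val) ++
          (pw 2 (l - l₂) ++ (pw 0 j₂.val ++ (c :: R)))))) := by
        refine chain'_pw_append _ _ (chain'_pw_append _ _ (chain'_pw_append _ _
          (chain'_pw_append _ _ hTail ?_) ?_) ?_) ?_
        · intro x hx
          rw [mem_head?_pw_append_of_ne j₂.2 hx]; exact good_mk (by decide)
        · intro x hx
          rcases mem_head?_pw_append hx with rfl | hx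
          · exact good_mk (by decide)
          · rw [mem_head?_pw_append_of_ne j₂.2 hx]; exact good_mk (by decide)
        · intro x hx
          rw [mem_head?_pw_append_of_ne (by simpa using (ρ j).2) hx]; exact good_mk (by decide)
        · intro x hx
          rw [mem_head?_pw_append_of_ne j.2 hx]; exact good_mk (by decide)
      rw [toWord_eq hprod hch, pw_cons (by simpa using (ρ j).2) 1]
      simp [List.cons_append]
    · -- w⁻ with x-run tail : cancellation
      by_cases hl : l₂ = l
      · subst hl
        by_cases hs : j₂.val = j.val
        · -- full cancellation of the x-run
          cases b₂
          · -- tail comes from a v-type generator : `z⁻¹` survives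
            replace hc : c.1 = 1 ∨ c = (2, false) := hc
            refine ⟨(2, false), c :: R, rfl, ?_⟩
            show _ = pw 2 (-l₂) ++ (pw 1 (θ j).val ++ ((2, false) :: _))
            have hprod : E ρ θ (j, l₂, true) false * g
                = FreeGroup.mk (pw 2 (-l₂) ++ (pw 1 (θ j).val ++ (pw 2 (-1) ++ (c :: R)))) := by
              have hmk : FreeGroup.mk (pw 2 (-l₂) ++ (pw 1 (θ j).val ++ (pw 2 (-1) ++ (c :: R))))
                  = FreeGroup.of 2 ^ (-l₂) * (FreeGroup.of 1 ^ (θ j).val *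
                      (FreeGroup.of 2 ^ (-1 : ℤ) * FreeGroup.mk (c :: R))) := by
                simp only [← FreeGroup.mul_mk, mk_pw]
              rw [E_w_neg, hg2, hmk, hs]
              group
            have hch : List.Chain' Good
                (pw 2 (-l₂) ++ (pw 1 (θ j).val ++ (pw 2 (-1) ++ (c :: R)))) := by
              refine chain'_pw_append _ _ (chain'_pw_append _ _
                (chain'_pw_append _ _ hcR ?_) ?_) ?_
              · intro x hx
                rw [mem_head?_cons hx]
                rcases hc with h | h
                · exact good_of_ne (by rw [h]; decide)
                · rw [h]; exact good_mk_snd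
              · intro x hx
                rw [mem_head?_pw_append_of_ne (by decide) hx]; exact good_mk (by decide)
              · intro x hx
                rw [mem_head?_pw_append_of_ne (θ j).2 hx]; exact good_mk (by decide)
            rw [toWord_eq hprod hch, pw_neg_one]
            simp [List.cons_append]
          · -- excluded: same generator, inverse exponent
            exfalso
            exact hne ⟨by rw [Subtype.ext hs], rfl⟩
        · -- partial cancellation
          have hs' : j₂.val - j.val ≠ 0 := sub_ne_zero.mpr hs
          refine ⟨(2, false), pw 0 (j₂.val - j.val) ++ (c :: R), rfl, ?_⟩
          show _ = pw 2 (-l₂) ++ (pw 1 (θ j).val ++ ((2, false) :: _))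
          have hprod : E ρ θ (j, l₂, true) false * g
              = FreeGroup.mk (pw 2 (-l₂) ++ (pw 1 (θ j).val ++ (pw 2 (-1) ++
                  (pw 0 (j₂.val - j.val) ++ (c :: R))))) := by
            have hmk : FreeGroup.mk (pw 2 (-l₂) ++ (pw 1 (θ j).val ++ (pw 2 (-1) ++
                  (pw 0 (j₂.val - j.val) ++ (c :: R)))))
                = FreeGroup.of 2 ^ (-l₂) * (FreeGroup.of 1 ^ (θ j).val *
                    (FreeGroup.of 2 ^ (-1 : ℤ) *
                      (FreeGroup.of 0 ^ (j₂.val - j.val) * FreeGroup.mk (c :: R)))) := by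
              simp only [← FreeGroup.mul_mk, mk_pw]
            rw [E_w_neg, hg2, hmk]
            group
          have hch : List.Chain' Good (pw 2 (-l₂) ++ (pw 1 (θ j).val ++ (pw 2 (-1) ++
              (pw 0 (j₂.val - j.val) ++ (c :: R))))) := by
            refine chain'_pw_append _ _ (chain'_pw_append _ _ (chain'_pw_append _ _
              (chain'_pw_append _ _ hcR ?_) ?_) ?_) ?_
            · intro x hx
              rw [mem_head?_cons hx]; exact good_of_ne (Ne.symm hc0)
            · intro x hx
              rw [mem_head?_pw_append_of_ne hs' hx]; exact good_mk (by decide)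
            · intro x hx
              rw [mem_head?_pw_append_of_ne (by decide) hx]; exact good_mk (by decide)
            · intro x hx
              rw [mem_head?_pw_append_of_ne (θ j).2 hx]; exact good_mk (by decide)
          rw [toWord_eq hprod hch, pw_neg_one]
          simp [List.cons_append]
      · -- different conjugating level : no interaction
        have hd : l - l₂ ≠ 0 := sub_ne_zero.mpr (fun h => hl h.symm)
        refine ⟨(2, false), pw 0 (-j.val) ++ (pw 2 (l - l₂) ++ (pw 0 j₂.val ++ (c :: R))),
          rfl, ?_⟩
        show _ = pw 2 (-l) ++ (pw 1 (θ j).val ++ ((2, false) :: _))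
        have hprod : E ρ θ (j, l, true) false * g
            = FreeGroup.mk (pw 2 (-l) ++ (pw 1 (θ j).val ++ (pw 2 (-1) ++ (pw 0 (-j.val) ++
                (pw 2 (l - l₂) ++ (pw 0 j₂.val ++ (c :: R))))))) := by
          have hmk : FreeGroup.mk (pw 2 (-l) ++ (pw 1 (θ j).val ++ (pw 2 (-1) ++
                (pw 0 (-j.val) ++ (pw 2 (l - l₂) ++ (pw 0 j₂.val ++ (c :: R)))))))
              = FreeGroup.of 2 ^ (-l) * (FreeGroup.of 1 ^ (θ j).val *
                  (FreeGroup.of 2 ^ (-1 : ℤ) * (FreeGroup.of 0 ^ (-j.val) *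
                    (FreeGroup.of 2 ^ (l - l₂) *
                      (FreeGroup.of 0 ^ j₂.val * FreeGroup.mk (c :: R)))))) := by
            simp only [← FreeGroup.mul_mk, mk_pw]
          rw [E_w_neg, hg2, hmk]
          group
        have hch : List.Chain' Good (pw 2 (-l) ++ (pw 1 (θ j).val ++ (pw 2 (-1) ++
            (pw 0 (-j.val) ++ (pw 2 (l - l₂) ++ (pw 0 j₂.val ++ (c :: R))))))) := by
          refine chain'_pw_append _ _ (chain'_pw_append _ _ (chain'_pw_append _ _
            (chain'_pw_append _ _ (chain'_pw_append _ _ hTail ?_) ?_) ?_) ?_) ?_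
          · intro x hx
            rw [mem_head?_pw_append_of_ne j₂.2 hx]; exact good_mk (by decide)
          · intro x hx
            rw [mem_head?_pw_append_of_ne hd hx]; exact good_mk (by decide)
          · intro x hx
            rw [mem_head?_pw_append_of_ne (by simpa using j.2) hx]; exact good_mk (by decide)
          · intro x hx
            rw [mem_head?_pw_append_of_ne (by decide) hx]; exact good_mk (by decide)
          · intro x hx
            rw [mem_head?_pw_append_of_ne (θ j).2 hx]; exact good_mk (by decide)
        rw [toWord_eq hprod hch, pw_neg_one]
        simp [List.cons_append]
    · -- w⁺, tail starts with an x-run : no interaction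
      refine ⟨(2, true), pw 1 (-(θ j).val) ++
          (pw 2 (l - l₂) ++ (pw 0 j₂.val ++ (c :: R))), rfl, ?_⟩
      show _ = pw 2 (-l) ++ (pw 0 j.val ++ ((2, true) :: _))
      have hprod : E ρ θ (j, l, true) true * g
          = FreeGroup.mk (pw 2 (-l) ++ (pw 0 j.val ++ (pw 2 1 ++ (pw 1 (-(θ j).val) ++
              (pw 2 (l - l₂) ++ (pw 0 j₂.val ++ (c :: R))))))) := by
        have hmk : FreeGroup.mk (pw 2 (-l) ++ (pw 0 j.val ++ (pw 2 1 ++ (pw 1 (-(θ j).val) ++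
              (pw 2 (l - l₂) ++ (pw 0 j₂.val ++ (c :: R)))))))
            = FreeGroup.of 2 ^ (-l) * (FreeGroup.of 0 ^ j.val *
                (FreeGroup.of 2 ^ (1 : ℤ) * (FreeGroup.of 1 ^ (-(θ j).val) *
                  (FreeGroup.of 2 ^ (l - l₂) *
                    (FreeGroup.of 0 ^ j₂.val * FreeGroup.mk (c :: R)))))) := by
          simp only [← FreeGroup.mul_mk, mk_pw]
        rw [E_w_pos, hg2, hmk]
        group
      have hch : List.Chain' Good (pw 2 (-l) ++ (pw 0 j.val ++ (pw 2 1 ++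
          (pw 1 (-(θ j).val) ++ (pw 2 (l - l₂) ++ (pw 0 j₂.val ++ (c :: R))))))) := by
        refine chain'_pw_append _ _ (chain'_pw_append _ _ (chain'_pw_append _ _
          (chain'_pw_append _ _ (chain'_pw_append _ _ hTail ?_) ?_) ?_) ?_) ?_
        · intro x hx
          rw [mem_head?_pw_append_of_ne j₂.2 hx]; exact good_mk (by decide)
        · intro x hx
          rcases mem_head?_pw_append hx with rfl | hx
          · exact good_mk (by decide)
          · rw [mem_head?_pw_append_of_ne j₂.2 hx]; exact good_mk (by decide)
        · intro x hx
          rw [mem_head?_pw_append_of_ne (by simpa using (θ j).2) hx]; exact good_mk (by decide)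
        · intro x hx
          rw [mem_head?_pw_append_of_ne (by decide) hx]; exact good_mk (by decide)
        · intro x hx
          rw [mem_head?_pw_append_of_ne j.2 hx]; exact good_mk (by decide)
      rw [toWord_eq hprod hch, pw_one]
      simp [List.cons_append]
end Step
section Main

open FreeGroup List

lemma sMap_single (ρ θ : Equiv.Perm Zstar) (i : SIdx) (e : Bool) :
    sMap ρ θ (FreeGroup.mk [(i, e)]) = E ρ θ i e := by
  cases e
  · have h1 : FreeGroup.mk [(i, false)] = (FreeGroup.of i)⁻¹ := by
      have h2 : FreeGroup.invRev [(i, true)] = [(i, false)] := by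
        simp [FreeGroup.invRev]
      rw [← h2, ← FreeGroup.inv_mk]; rfl
    rw [h1]
    show (sMap ρ θ) (FreeGroup.of i)⁻¹ = _
    rw [_root_.map_inv]
    unfold sMap E
    rw [FreeGroup.lift_apply_of]
    simp
  · show sMap ρ θ (FreeGroup.of i) = _
    unfold sMap E
    rw [FreeGroup.lift_apply_of]
    simp

lemma main (ρ θ : Equiv.Perm Zstar) : ∀ (T : List (SIdx × Bool)) (i : SIdx) (e : Bool),
    List.Chain' Good ((i, e) :: T) → Y ρ θ i e (sMap ρ θ (FreeGroup.mk ((i, e) :: T))) := by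
  intro T
  induction T with
  | nil =>
    intro i e _
    rw [sMap_single]
    obtain ⟨j, l, b⟩ := i
    exact base ρ θ j l b e
  | cons p T ih =>
    intro i e hch
    obtain ⟨i₂, e₂⟩ := p
    have h2 : FreeGroup.mk ((i, e) :: (i₂, e₂) :: T)
        = FreeGroup.mk [(i, e)] * FreeGroup.mk ((i₂, e₂) :: T) := by
      rw [FreeGroup.mul_mk]; rfl
    have hY2 := ih i₂ e₂ hch.tail
    have hgood : Good (i, e) (i₂, e₂) := (List.isChain_cons_cons.mp hch).1
    have hne : ¬(i₂ = i ∧ e₂ = !e) := by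
      rintro ⟨h4, h5⟩
      exact hgood ⟨h4.symm, by rw [h5]; simp⟩
    rw [h2, _root_.map_mul, sMap_single]
    obtain ⟨j, l, b⟩ := i
    exact step ρ θ j l b e i₂ e₂ hne hY2

end Main

/-- the homomorphism from the free group on the index set `ℤ* × ℤ × {0,1}`
sending `(j,l,0) ↦ v_j^l` and `(j,l,1) ↦ w_j^l` is injective with image `H`; i.e. `S` is a
free basis of `H`.  (The statement for `S̃` and `H̃` is the same statement, for the
permutations `ρ̃, θ̃`.) -/
theorem stmt4 (ρ θ : Equiv.Perm Zstar) :
    Function.Injective (sMap ρ θ) ∧ (sMap ρ θ).range = Hsub ρ θ := by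
  constructor
  · rw [injective_iff_map_eq_one]
    intro a ha
    rcases hL : a.toWord with _ | ⟨⟨i, e⟩, T⟩
    · rw [← FreeGroup.mk_toWord (x := a), hL]
      exact FreeGroup.one_eq_mk.symm
    · exfalso
      have hch : List.Chain' Good ((i, e) :: T) := by
        rw [← hL]; exact chain'_toWord a
      have hY := main ρ θ T i e hch
      rw [show FreeGroup.mk ((i, e) :: T) = a from by rw [← hL, FreeGroup.mk_toWord]] at hY
      rw [ha] at hY
      exact Y_ne_one hY rfl
  · exact FreeGroup.range_lift_eq_closure
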